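/- (Ergodic inequality (3.8)) Let sequences (xᵏ)_{k≥0} ⊆ ℝⁿ and (yᵏ)_{k≥1}, (ȳᵏ)_{k≥0} ⊆ ℝᵐ be generated by Algorithm 1 with stepsizes τ_k, λ_k > 0 and tolerances ε_{k+1}, δ_{k+1} ≥ 0 (i.e., conditions (i)–(iii) hold at every iteration k). Assume (τ_k) and (λ_k) are nondecreasing and R − τ_kλ_kS⁻¹ is positive definite for every k. Then for every N ≥ 1 and all (x, y) ∈ ℝⁿ × ℝᵐ: N·(L(x̂ᴺ, y) − L(x, ŷᴺ)) ≤ (1/(2τ_0))‖y − ȳ⁰‖²_S − (1/(2τ_N))‖y − ȳᴺ‖²_S + (1/(2λ_0))‖x − x⁰‖²_{AᵀRA} − (1/(2λ_N))‖x − xᴺ‖²_{AᵀRA} + Σ_{k=0}^{N−1} √(ε_{k+1}/τ_k)·‖y − ȳᵏ⁺¹‖_S + Σ_{k=0}^{N−1} (2ε_{k+1} + δ_{k+1}). -/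

import Mathlib

open Matrix Finset Filter

/-- squared M-norm: ⟨x, M x⟩ -/
noncomputable def sqnorm {d : ℕ} (M : Matrix (Fin d) (Fin d) ℝ) (x : Fin d → ℝ) : ℝ :=
  x ⬝ᵥ M.mulVec x

/-- M-norm: √⟨x, M x⟩ -/
noncomputable def mnorm {d : ℕ} (M : Matrix (Fin d) (Fin d) ℝ) (x : Fin d → ℝ) : ℝ :=
  Real.sqrt (x ⬝ᵥ M.mulVec x)

/-- The Lagrangian L(x,y) = f(x) + ⟨Ax, y⟩ − g(y). -/
noncomputable def Lag {n m : ℕ} (f : (Fin n → ℝ) → ℝ) (g : (Fin m → ℝ) → ℝ)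
    (A : Matrix (Fin m) (Fin n) ℝ) (x : Fin n → ℝ) (y : Fin m → ℝ) : ℝ :=
  f x + A.mulVec x ⬝ᵥ y - g y

namespace ErgAux

variable {d : ℕ}

theorem dpSymm {S : Matrix (Fin d) (Fin d) ℝ} (hS : S.IsHermitian) (u v : Fin d → ℝ) :
    u ⬝ᵥ S.mulVec v = v ⬝ᵥ S.mulVec u := by
  have hT : Sᵀ = S := by simpa [Matrix.IsHermitian, Matrix.conjTranspose_eq_transpose_of_trivial] using hS
  rw [Matrix.dotProduct_mulVec u S v]
  conv_lhs => rw [← hT, Matrix.vecMul_transpose]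
  rw [dotProduct_comm]

theorem sq_nn {S : Matrix (Fin d) (Fin d) ℝ} (hS : S.PosSemidef) (v : Fin d → ℝ) :
    0 ≤ sqnorm S v := by simpa [sqnorm] using hS.dotProduct_mulVec_nonneg v

theorem sq_zero (S : Matrix (Fin d) (Fin d) ℝ) : sqnorm S 0 = 0 := by
  simp [sqnorm]

theorem mnorm_nn (S : Matrix (Fin d) (Fin d) ℝ) (v : Fin d → ℝ) : 0 ≤ mnorm S v :=
  Real.sqrt_nonneg _

theorem sq_smul (S : Matrix (Fin d) (Fin d) ℝ) (c : ℝ) (v : Fin d → ℝ) :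
    sqnorm S (c • v) = c ^ 2 * sqnorm S v := by
  simp [sqnorm, Matrix.mulVec_smul, dotProduct_smul, smul_dotProduct, smul_eq_mul]
  ring

theorem sq_sub_comm (S : Matrix (Fin d) (Fin d) ℝ) (u v : Fin d → ℝ) :
    sqnorm S (u - v) = sqnorm S (v - u) := by
  simp only [sqnorm, Matrix.mulVec_sub, dotProduct_sub, sub_dotProduct]
  ring

theorem polar {S : Matrix (Fin d) (Fin d) ℝ} (hS : S.IsHermitian) (a b c : Fin d → ℝ) :
    (S.mulVec (a - b)) ⬝ᵥ (c - b) * 2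
      = sqnorm S (a - b) + sqnorm S (c - b) - sqnorm S (a - c) := by
  rw [dotProduct_comm]
  simp only [sqnorm, Matrix.mulVec_sub, dotProduct_sub, sub_dotProduct]
  linear_combination dpSymm hS c a + dpSymm hS a b + dpSymm hS b c

theorem sinv_s {S : Matrix (Fin d) (Fin d) ℝ} (hS : S.PosDef) (v : Fin d → ℝ) :
    S⁻¹.mulVec (S.mulVec v) = v := by
  rw [Matrix.mulVec_mulVec, Matrix.nonsing_inv_mul _ hS.det_pos.ne'.isUnit, Matrix.one_mulVec]

theorem sum_dp {t : Finset ℕ} {x : ℕ → Fin d → ℝ} {y : Fin d → ℝ} :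
    (∑ k ∈ t, x k) ⬝ᵥ y = ∑ k ∈ t, x k ⬝ᵥ y := by
  simp [dotProduct, Finset.sum_mul]; exact Finset.sum_comm

theorem dp_sum {t : Finset ℕ} {x : ℕ → Fin d → ℝ} {y : Fin d → ℝ} :
    y ⬝ᵥ (∑ k ∈ t, x k) = ∑ k ∈ t, y ⬝ᵥ x k := by
  rw [dotProduct_comm, sum_dp]
  exact Finset.sum_congr rfl fun k _ => dotProduct_comm _ _

theorem dpAt {n : ℕ} (A : Matrix (Fin d) (Fin n) ℝ) (w : Fin d → ℝ) (v : Fin n → ℝ) :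
    (Aᵀ.mulVec w) ⬝ᵥ v = w ⬝ᵥ A.mulVec v := by
  rw [dotProduct_comm, Matrix.dotProduct_mulVec, Matrix.vecMul_transpose,
    dotProduct_comm]

theorem convexOn_affine (c : Fin d → ℝ) (b : ℝ) :
    ConvexOn ℝ Set.univ (fun y : Fin d → ℝ => y ⬝ᵥ c + b) := by
  refine ⟨convex_univ, fun u _ v _ a a' ha ha' hab => ?_⟩
  simp only [add_dotProduct, smul_dotProduct, smul_eq_mul]
  have ha2 : a' = 1 - a := by linarith
  rw [ha2]; apply le_of_eq; ring

theorem cross_bound {S R : Matrix (Fin d) (Fin d) ℝ} (hS : S.PosDef)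
    {t l : ℝ} (ht : 0 < t) (hl : 0 < l) (hPD : (R - (t * l) • S⁻¹).PosDef)
    (u v : Fin d → ℝ) :
    u ⬝ᵥ v ≤ 2⁻¹ * l⁻¹ * sqnorm R u + 2⁻¹ * t⁻¹ * sqnorm S v := by
  have hSinv : (S⁻¹).PosDef := hS.inv
  have h1 : t * l * (u ⬝ᵥ S⁻¹.mulVec u) ≤ sqnorm R u := by
    have h0 : (0:ℝ) ≤ u ⬝ᵥ ((R - (t * l) • S⁻¹).mulVec u) := by
      simpa using (hPD.posSemidef).dotProduct_mulVec_nonneg u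
    rw [Matrix.sub_mulVec, smul_mulVec, dotProduct_sub, dotProduct_smul, smul_eq_mul] at h0
    simp only [sqnorm]
    linarith
  have h2 : 2 * t * (u ⬝ᵥ v) ≤ t ^ 2 * (u ⬝ᵥ S⁻¹.mulVec u) + sqnorm S v := by
    have h0 : (0:ℝ) ≤ (t • u - S.mulVec v) ⬝ᵥ S⁻¹.mulVec (t • u - S.mulVec v) := by
      simpa using hSinv.posSemidef.dotProduct_mulVec_nonneg (t • u - S.mulVec v)
    have e1 : (S.mulVec v) ⬝ᵥ S⁻¹.mulVec u = u ⬝ᵥ v := by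
      rw [dpSymm hSinv.isHermitian, sinv_s hS]
    have e2 : u ⬝ᵥ S⁻¹.mulVec (S.mulVec v) = u ⬝ᵥ v := by rw [sinv_s hS]
    have e3 : (S.mulVec v) ⬝ᵥ S⁻¹.mulVec (S.mulVec v) = sqnorm S v := by
      rw [sinv_s hS, dotProduct_comm, sqnorm]
    simp only [Matrix.mulVec_sub, Matrix.mulVec_smul, dotProduct_sub, sub_dotProduct,
      dotProduct_smul, smul_dotProduct, smul_eq_mul] at h0
    rw [e1, e2, e3] at h0
    nlinarith [h0]
  have h3 : 2 * t * l * (u ⬝ᵥ v) ≤ t * sqnorm R u + l * sqnorm S v := by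
    nlinarith [mul_le_mul_of_nonneg_left h2 hl.le, mul_le_mul_of_nonneg_left h1 ht.le]
  have h4 : u ⬝ᵥ v ≤ (t * sqnorm R u + l * sqnorm S v) / (2 * t * l) := by
    rw [le_div_iff₀ (by positivity)]
    nlinarith [h3]
  refine h4.trans (le_of_eq ?_)
  field_simp

theorem sharpen {S : Matrix (Fin d) (Fin d) ℝ} (hS : S.PosSemidef)
    {h : (Fin d → ℝ) → ℝ} (hconv : ConvexOn ℝ Set.univ h) {z : Fin d → ℝ} {e t : ℝ}
    (he : 0 ≤ e) (ht : 0 < t)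
    (hmin : ∀ w, h z - e / 2 ≤ h w + 1 / (2 * t) * sqnorm S (w - z)) (y : Fin d → ℝ) :
    h z - e / 2 - Real.sqrt (e / t) * mnorm S (y - z) ≤ h y := by
  set r2 : ℝ := sqnorm S (y - z) with hr2def
  have hr2 : 0 ≤ r2 := sq_nn hS _
  set r : ℝ := mnorm S (y - z) with hrdef
  have hr : 0 ≤ r := Real.sqrt_nonneg _
  have hrr : r ^ 2 = r2 := by rw [hrdef, mnorm]; exact Real.sq_sqrt hr2
  set s : ℝ := Real.sqrt (e / t) with hsdef
  have hs : 0 ≤ s := Real.sqrt_nonneg _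
  have hss : s ^ 2 = e / t := Real.sq_sqrt (by positivity)
  have H : ∀ c : ℝ, 0 < c → c ≤ 1 → h z - h y ≤ e / (2 * c) + c * r2 / (2 * t) := by
    intro c hc hc1
    have hvec : (1 - c) • z + c • y = z + c • (y - z) := by
      ext i; simp [Pi.add_apply, Pi.smul_apply, Pi.sub_apply, smul_eq_mul]; ring
    have hcx : h (z + c • (y - z)) ≤ (1 - c) * h z + c * h y := by
      have := hconv.2 (Set.mem_univ z) (Set.mem_univ y) (by linarith : (0:ℝ) ≤ 1 - c) hc.le
        (by ring)
      rwa [hvec, smul_eq_mul, smul_eq_mul] at this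
    have hsq : sqnorm S (z + c • (y - z) - z) = c ^ 2 * r2 := by
      have : z + c • (y - z) - z = c • (y - z) := by abel
      rw [this, sq_smul]
    have hm := hmin (z + c • (y - z))
    rw [hsq] at hm
    have h2t : (0:ℝ) < 2 * t := by linarith
    have e1 : 1 / (2 * t) * (c ^ 2 * r2) * (2 * t) = c ^ 2 * r2 := by field_simp
    have step2 : 2 * t * c * (h z - h y) ≤ t * e + c ^ 2 * r2 := by
      have base : c * (h z - h y) - e / 2 ≤ 1 / (2 * t) * (c ^ 2 * r2) := by nlinarith
      have := mul_le_mul_of_nonneg_right base h2t.le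
      rw [e1] at this
      nlinarith [this]
    rw [div_add_div _ _ (by positivity : (2*c:ℝ) ≠ 0) (by positivity : (2*t:ℝ) ≠ 0)]
    rw [le_div_iff₀ (by positivity)]
    nlinarith [step2]
  by_cases he0 : e = 0
  · subst he0
    have hs0 : s = 0 := by rw [hsdef, zero_div, Real.sqrt_zero]
    rw [hs0]
    simp only [zero_div, zero_mul, sub_zero]
    rcases eq_or_lt_of_le hr2 with h0 | hpos
    · have := H 1 one_pos le_rfl
      rw [← h0] at this
      simp at this
      linarith
    · by_contra hcon
      push_neg at hcon
      set G : ℝ := h z - h y with hG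
      have hGpos : 0 < G := by rw [hG]; linarith
      have hcpos : 0 < min 1 (t * G / r2) := lt_min one_pos (by positivity)
      have hc1 : min 1 (t * G / r2) ≤ 1 := min_le_left _ _
      have := H _ hcpos hc1
      have hle : min 1 (t * G / r2) * r2 / (2 * t) ≤ G / 2 := by
        have hmin2 : min 1 (t * G / r2) * r2 ≤ t * G := by
          have h2 := mul_le_mul_of_nonneg_right (min_le_right 1 (t * G / r2)) hr2
          have h3 : t * G / r2 * r2 = t * G := by field_simp
          linarith [h3 ▸ h2]
        rw [div_le_div_iff₀ (by positivity) (by positivity)]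
        linarith
      simp only [zero_div, zero_add] at this
      linarith
  · have hepos : 0 < e := lt_of_le_of_ne he (Ne.symm he0)
    have hst : s * t = Real.sqrt (e * t) := by
      rw [hsdef, ← Real.sqrt_sq ht.le, ← Real.sqrt_mul (by positivity)]
      congr 1; field_simp; ring
      rw [Real.sq_sqrt (by positivity)]
    by_cases hcase : r2 ≤ e * t
    · have H1 := H 1 one_pos le_rfl
      have hrst : r ≤ s * t := by
        rw [hrdef, hst]
        exact Real.sqrt_le_sqrt hcase
      have : r2 / (2 * t) ≤ s * r := by
        rw [div_le_iff₀ (by positivity), ← hrr]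
        nlinarith [mul_le_mul_of_nonneg_left hrst hr]
      simp only [mul_one, one_mul] at H1
      linarith [H1, this]
    · push_neg at hcase
      have hr2pos : 0 < r2 := lt_trans (by positivity) hcase
      have hrpos : 0 < r := by rw [hrdef, mnorm]; exact Real.sqrt_pos.mpr hr2pos
      have hstr : s * t ≤ r := by
        rw [hst, hrdef]
        exact Real.sqrt_le_sqrt hcase.le
      have hspos : 0 < s := by
        have : (0:ℝ) < e / t := by positivity
        rw [hsdef]; exact Real.sqrt_pos.mpr this
      have hcpos : 0 < s * t / r := by positivity
      have hc1 : s * t / r ≤ 1 := by rw [div_le_one hrpos]; exact hstr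
      have Hc := H _ hcpos hc1
      have hE : e = s ^ 2 * t := by rw [hss]; field_simp
      have heq : e / (2 * (s * t / r)) + (s * t / r) * r2 / (2 * t) = s * r := by
        rw [hE, ← hrr]
        field_simp
        ring
      rw [heq] at Hc
      linarith

/-- telescoping sum bound -/
theorem tele (a c : ℕ → ℝ) (ha : ∀ k, 0 ≤ a k) (hc : ∀ k, 0 ≤ c k)
    (hmono : ∀ k, c (k + 1) ≤ c k) :
    ∀ N : ℕ, ∑ k ∈ Finset.range N, c k * (a k - a (k + 1)) ≤ c 0 * a 0 - c N * a N := by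
  intro N
  induction N with
  | zero => simp
  | succ N ih =>
    rw [Finset.sum_range_succ]
    have h1 : c (N + 1) * a (N + 1) ≤ c N * a (N + 1) :=
      mul_le_mul_of_nonneg_right (hmono N) (ha (N + 1))
    nlinarith [ih, h1]

/-- The key one-iteration estimate. -/
theorem keystep {n m : ℕ}
    (f : (Fin n → ℝ) → ℝ) (g : (Fin m → ℝ) → ℝ) (hg : ConvexOn ℝ Set.univ g)
    (A : Matrix (Fin m) (Fin n) ℝ)
    (S R : Matrix (Fin m) (Fin m) ℝ) (hS : S.PosDef) (hR : R.PosDef)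
    {t l e dl : ℝ} (ht : 0 < t) (hl : 0 < l) (he : 0 ≤ e) (hd : 0 ≤ dl)
    (hPD : (R - (t * l) • S⁻¹).PosDef)
    (xk x1 : Fin n → ℝ) (y1 b0 b1 : Fin m → ℝ)
    (hi : ∀ w, g w ≥ g y1 + ((1 / t) • S.mulVec (b0 - y1) + A.mulVec xk) ⬝ᵥ (w - y1) - e / 2)
    (hii : ∀ x, f x + A.mulVec x ⬝ᵥ y1
        ≥ f x1 + A.mulVec x1 ⬝ᵥ y1
          + ((1 / l) • (Aᵀ * R * A).mulVec (xk - x1)) ⬝ᵥ (x - x1) - dl)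
    (hiii : ∀ w, g w - A.mulVec x1 ⬝ᵥ w + 1 / (2 * t) * sqnorm S (w - b0)
        ≥ g b1 - A.mulVec x1 ⬝ᵥ b1 + 1 / (2 * t) * sqnorm S (b1 - b0) - e / 2)
    (x : Fin n → ℝ) (y : Fin m → ℝ) :
    (f x1 + A.mulVec x1 ⬝ᵥ y - g y) - (f x + A.mulVec x ⬝ᵥ y1 - g y1)
      ≤ 1 / (2 * t) * (sqnorm S (y - b0) - sqnorm S (y - b1))
        + 1 / (2 * l) * (sqnorm R (A.mulVec (x - xk)) - sqnorm R (A.mulVec (x - x1)))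
        + Real.sqrt (e / t) * mnorm S (y - b1) + (2 * e + dl) := by
  have hSsym := dpSymm hS.isHermitian
  -- E1 : primal inequality with R-metric rewritten
  have hMdot : ((1 / l) • (Aᵀ * R * A).mulVec (xk - x1)) ⬝ᵥ (x - x1)
      = (1 / l) * ((R.mulVec (A.mulVec (xk - x1))) ⬝ᵥ (A.mulVec (x - x1))) := by
    rw [smul_dotProduct, smul_eq_mul]
    congr 1
    rw [show Aᵀ * R * A = Aᵀ * (R * A) from by rw [Matrix.mul_assoc],
      ← Matrix.mulVec_mulVec, ← Matrix.mulVec_mulVec, dpAt]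
  have E1 : f x1 + A.mulVec x1 ⬝ᵥ y1 - f x - A.mulVec x ⬝ᵥ y1
      ≤ dl - (1 / l) * ((R.mulVec (A.mulVec (xk - x1))) ⬝ᵥ (A.mulVec (x - x1))) := by
    have h := hii x
    rw [hMdot] at h
    linarith
  -- E6 : polarization identity for the R-metric term
  have E6 : (R.mulVec (A.mulVec (xk - x1))) ⬝ᵥ (A.mulVec (x - x1)) * 2
      = sqnorm R (A.mulVec (xk - x1)) + sqnorm R (A.mulVec (x - x1))
        - sqnorm R (A.mulVec (x - xk)) := by
    have h := polar hR.isHermitian (A.mulVec xk) (A.mulVec x1) (A.mulVec x)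
    simp only [← Matrix.mulVec_sub] at h
    have hsw : sqnorm R (A.mulVec (xk - x)) = sqnorm R (A.mulVec (x - xk)) := by
      rw [Matrix.mulVec_sub, Matrix.mulVec_sub]; exact sq_sub_comm R _ _
    rw [h, hsw]
  have E6s : (1 / l) * ((R.mulVec (A.mulVec (xk - x1))) ⬝ᵥ (A.mulVec (x - x1)) * 2)
      = (1 / l) * (sqnorm R (A.mulVec (xk - x1)) + sqnorm R (A.mulVec (x - x1))
        - sqnorm R (A.mulVec (x - xk))) := by rw [E6]
  -- E2 : sharpened version of (iii)
  have heqaff : (fun w : Fin m → ℝ => g w + (w ⬝ᵥ (t⁻¹ • S.mulVec (b1 - b0) - A.mulVec x1)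
        + 1 / (2 * t) * (sqnorm S b0 - sqnorm S b1)))
      = fun w => g w - A.mulVec x1 ⬝ᵥ w + 1 / (2 * t) * sqnorm S (w - b0)
          - 1 / (2 * t) * sqnorm S (w - b1) := by
    funext w
    simp only [sqnorm, Matrix.mulVec_sub, Matrix.mulVec_smul, dotProduct_sub, sub_dotProduct,
      dotProduct_smul, smul_dotProduct, smul_eq_mul]
    have e0 : A.mulVec x1 ⬝ᵥ w = w ⬝ᵥ A.mulVec x1 := dotProduct_comm _ _
    linear_combination e0 + (1/(2*t)) * dpSymm hS.isHermitian b0 w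
      - (1/(2*t)) * dpSymm hS.isHermitian b1 w
  have hconvh : ConvexOn ℝ Set.univ
      (fun w => g w - A.mulVec x1 ⬝ᵥ w + 1 / (2 * t) * sqnorm S (w - b0)
        - 1 / (2 * t) * sqnorm S (w - b1)) := by
    rw [← heqaff]
    exact hg.add (convexOn_affine _ _)
  have hminh : ∀ w, (fun w => g w - A.mulVec x1 ⬝ᵥ w + 1 / (2 * t) * sqnorm S (w - b0)
        - 1 / (2 * t) * sqnorm S (w - b1)) b1 - e / 2
      ≤ (fun w => g w - A.mulVec x1 ⬝ᵥ w + 1 / (2 * t) * sqnorm S (w - b0)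
        - 1 / (2 * t) * sqnorm S (w - b1)) w + 1 / (2 * t) * sqnorm S (w - b1) := by
    intro w
    have h3 := hiii w
    have hz : sqnorm S (b1 - b1) = 0 := by rw [sub_self]; exact sq_zero S
    simp only []
    rw [hz]
    linarith
  have E2 := sharpen hS.posSemidef hconvh he ht hminh y
  have hz : sqnorm S (b1 - b1) = 0 := by rw [sub_self]; exact sq_zero S
  rw [hz] at E2
  -- E3 : dual inequality at b1
  have E3 := hi b1
  have e3dot : ((1 / t) • S.mulVec (b0 - y1) + A.mulVec xk) ⬝ᵥ (b1 - y1)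
      = (1 / t) * ((S.mulVec (b0 - y1)) ⬝ᵥ (b1 - y1))
        + (A.mulVec xk ⬝ᵥ b1 - A.mulVec xk ⬝ᵥ y1) := by
    simp only [add_dotProduct, smul_dotProduct, smul_eq_mul, dotProduct_sub, one_div]
    ring
  rw [e3dot] at E3
  -- E5 : strong convexity slack
  have E5 : sqnorm S (b1 - y1) ≤ 2 * ((S.mulVec (b0 - y1)) ⬝ᵥ (b1 - y1))
      + sqnorm S (b1 - b0) := by
    have h1 := polar hS.isHermitian b0 y1 b1
    have h2 := sq_sub_comm S b0 b1
    have h3 := sq_nn hS.posSemidef (b0 - y1)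
    linarith
  have E5s := mul_le_mul_of_nonneg_left E5 (by positivity : (0:ℝ) ≤ 2⁻¹ * t⁻¹)
  -- E4 : cross term bound
  have E4 := cross_bound hS ht hl hPD (A.mulVec (x1 - xk)) (b1 - y1)
  have E4lin : (A.mulVec (x1 - xk)) ⬝ᵥ (b1 - y1)
      = A.mulVec x1 ⬝ᵥ b1 - A.mulVec x1 ⬝ᵥ y1 - A.mulVec xk ⬝ᵥ b1 + A.mulVec xk ⬝ᵥ y1 := by
    rw [Matrix.mulVec_sub, sub_dotProduct, dotProduct_sub, dotProduct_sub]
    ring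
  have E4neg : sqnorm R (A.mulVec (x1 - xk)) = sqnorm R (A.mulVec (xk - x1)) := by
    rw [Matrix.mulVec_sub, Matrix.mulVec_sub]
    exact sq_sub_comm R _ _
  rw [E4lin, E4neg] at E4
  -- normalize all coefficients and finish
  simp only [one_div, mul_inv] at E1 E2 E3 E5s E6s E4 ⊢
  linarith [E1, E2, E3, E5s, E6s, E4, he]
end ErgAux

/-- Ergodic inequality (3.8). -/
theorem ergodic_ineq {n m : ℕ}
    (f : (Fin n → ℝ) → ℝ) (g : (Fin m → ℝ) → ℝ)
    (hf : ConvexOn ℝ Set.univ f) (hg : ConvexOn ℝ Set.univ g)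
    (A : Matrix (Fin m) (Fin n) ℝ)
    (S R : Matrix (Fin m) (Fin m) ℝ) (hS : S.PosDef) (hR : R.PosDef)
    (τ lam : ℕ → ℝ) (hτpos : ∀ k, 0 < τ k) (hlampos : ∀ k, 0 < lam k)
    (hτmono : Monotone τ) (hlammono : Monotone lam)
    (hPD : ∀ k, (R - (τ k * lam k) • S⁻¹).PosDef)
    (ε δ : ℕ → ℝ) (hεnn : ∀ k, 0 ≤ ε k) (hδnn : ∀ k, 0 ≤ δ k)
    (xseq : ℕ → Fin n → ℝ) (yseq ybar : ℕ → Fin m → ℝ)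
    (hi : ∀ k, ∀ y, g y ≥ g (yseq (k+1)) +
        ((1 / τ k) • S.mulVec (ybar k - yseq (k+1)) + A.mulVec (xseq k)) ⬝ᵥ
          (y - yseq (k+1)) - ε (k+1) / 2)
    (hii : ∀ k, ∀ x, f x + A.mulVec x ⬝ᵥ yseq (k+1)
        ≥ f (xseq (k+1)) + A.mulVec (xseq (k+1)) ⬝ᵥ yseq (k+1)
          + ((1 / lam k) • (Aᵀ * R * A).mulVec (xseq k - xseq (k+1))) ⬝ᵥ
              (x - xseq (k+1)) - δ (k+1))
    (hiii : ∀ k, ∀ y, g y - A.mulVec (xseq (k+1)) ⬝ᵥ y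
          + (1 / (2 * τ k)) * sqnorm S (y - ybar k)
        ≥ g (ybar (k+1)) - A.mulVec (xseq (k+1)) ⬝ᵥ ybar (k+1)
          + (1 / (2 * τ k)) * sqnorm S (ybar (k+1) - ybar k) - ε (k+1) / 2) :
    ∀ N : ℕ, 1 ≤ N → ∀ (x : Fin n → ℝ) (y : Fin m → ℝ),
      (N : ℝ) * (Lag f g A ((N : ℝ)⁻¹ • ∑ k ∈ Finset.range N, xseq (k+1)) y
          - Lag f g A x ((N : ℝ)⁻¹ • ∑ k ∈ Finset.range N, yseq (k+1)))
        ≤ (1 / (2 * τ 0)) * sqnorm S (y - ybar 0)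
          - (1 / (2 * τ N)) * sqnorm S (y - ybar N)
          + (1 / (2 * lam 0)) * sqnorm R (A.mulVec (x - xseq 0))
          - (1 / (2 * lam N)) * sqnorm R (A.mulVec (x - xseq N))
          + ∑ k ∈ Finset.range N, Real.sqrt (ε (k+1) / τ k) * mnorm S (y - ybar (k+1))
          + ∑ k ∈ Finset.range N, (2 * ε (k+1) + δ (k+1)) := by
  intro N hN x y
  have hNpos : (0:ℝ) < N := by exact_mod_cast hN
  -- per-iteration key estimate
  have key : ∀ k, Lag f g A (xseq (k+1)) y - Lag f g A x (yseq (k+1))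
      ≤ 1 / (2 * τ k) * (sqnorm S (y - ybar k) - sqnorm S (y - ybar (k+1)))
        + 1 / (2 * lam k) *
            (sqnorm R (A.mulVec (x - xseq k)) - sqnorm R (A.mulVec (x - xseq (k+1))))
        + Real.sqrt (ε (k+1) / τ k) * mnorm S (y - ybar (k+1))
        + (2 * ε (k+1) + δ (k+1)) := by
    intro k
    have h := ErgAux.keystep f g hg A S R hS hR (hτpos k) (hlampos k) (hεnn (k+1))
      (hδnn (k+1)) (hPD k) (xseq k) (xseq (k+1)) (yseq (k+1)) (ybar k) (ybar (k+1))
      (hi k) (hii k) (hiii k) x y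
    simpa [Lag] using h
  have sum_le := Finset.sum_le_sum (fun k (_ : k ∈ Finset.range N) => key k)
  -- telescoping bounds
  have tel1 : ∑ k ∈ Finset.range N,
        1 / (2 * τ k) * (sqnorm S (y - ybar k) - sqnorm S (y - ybar (k+1)))
      ≤ 1 / (2 * τ 0) * sqnorm S (y - ybar 0) - 1 / (2 * τ N) * sqnorm S (y - ybar N) :=
    ErgAux.tele (fun k => sqnorm S (y - ybar k)) (fun k => 1 / (2 * τ k))
      (fun k => ErgAux.sq_nn hS.posSemidef _) (fun k => by have := hτpos k; positivity)
      (fun k => by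
        have h1 := hτmono (Nat.le_succ k)
        have h2 := hτpos k
        have h3 := hτpos (k+1)
        rw [div_le_div_iff₀ (by linarith) (by linarith)]
        linarith) N
  have tel2 : ∑ k ∈ Finset.range N,
        1 / (2 * lam k) *
          (sqnorm R (A.mulVec (x - xseq k)) - sqnorm R (A.mulVec (x - xseq (k+1))))
      ≤ 1 / (2 * lam 0) * sqnorm R (A.mulVec (x - xseq 0))
        - 1 / (2 * lam N) * sqnorm R (A.mulVec (x - xseq N)) :=
    ErgAux.tele (fun k => sqnorm R (A.mulVec (x - xseq k))) (fun k => 1 / (2 * lam k))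
      (fun k => ErgAux.sq_nn hR.posSemidef _) (fun k => by have := hlampos k; positivity)
      (fun k => by
        have h1 := hlammono (Nat.le_succ k)
        have h2 := hlampos k
        have h3 := hlampos (k+1)
        rw [div_le_div_iff₀ (by linarith) (by linarith)]
        linarith) N
  -- split the sum of per-step bounds
  rw [Finset.sum_add_distrib, Finset.sum_add_distrib, Finset.sum_add_distrib] at sum_le
  -- Jensen / linearity facts
  have A1 : (N:ℝ) * f ((N : ℝ)⁻¹ • ∑ k ∈ Finset.range N, xseq (k+1))
      ≤ ∑ k ∈ Finset.range N, f (xseq (k+1)) := by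
    have hj : f ((N : ℝ)⁻¹ • ∑ k ∈ Finset.range N, xseq (k+1))
        ≤ ∑ k ∈ Finset.range N, (N:ℝ)⁻¹ * f (xseq (k+1)) := by
      have := hf.map_sum_le (t := Finset.range N) (w := fun _ => (N:ℝ)⁻¹)
        (p := fun k => xseq (k+1)) (fun i _ => by positivity)
        (by simp [Finset.sum_const]; field_simp) (fun i _ => Set.mem_univ _)
      rw [Finset.smul_sum]
      simpa using this
    rw [← Finset.mul_sum] at hj
    have := mul_le_mul_of_nonneg_left hj hNpos.le
    rwa [← mul_assoc, mul_inv_cancel₀ hNpos.ne', one_mul] at this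
  have A3 : (N:ℝ) * g ((N : ℝ)⁻¹ • ∑ k ∈ Finset.range N, yseq (k+1))
      ≤ ∑ k ∈ Finset.range N, g (yseq (k+1)) := by
    have hj : g ((N : ℝ)⁻¹ • ∑ k ∈ Finset.range N, yseq (k+1))
        ≤ ∑ k ∈ Finset.range N, (N:ℝ)⁻¹ * g (yseq (k+1)) := by
      have := hg.map_sum_le (t := Finset.range N) (w := fun _ => (N:ℝ)⁻¹)
        (p := fun k => yseq (k+1)) (fun i _ => by positivity)
        (by simp [Finset.sum_const]; field_simp) (fun i _ => Set.mem_univ _)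
      rw [Finset.smul_sum]
      simpa using this
    rw [← Finset.mul_sum] at hj
    have := mul_le_mul_of_nonneg_left hj hNpos.le
    rwa [← mul_assoc, mul_inv_cancel₀ hNpos.ne', one_mul] at this
  have A2 : (N:ℝ) * (A.mulVec ((N : ℝ)⁻¹ • ∑ k ∈ Finset.range N, xseq (k+1)) ⬝ᵥ y)
      = ∑ k ∈ Finset.range N, A.mulVec (xseq (k+1)) ⬝ᵥ y := by
    rw [Matrix.mulVec_smul, smul_dotProduct, smul_eq_mul, ← Matrix.mulVecLin_apply, map_sum]
    rw [show ((∑ k ∈ Finset.range N, A.mulVecLin (xseq (k+1))) ⬝ᵥ y)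
        = ∑ k ∈ Finset.range N, (A.mulVecLin (xseq (k+1)) ⬝ᵥ y) from ErgAux.sum_dp]
    simp only [Matrix.mulVecLin_apply]
    rw [← mul_assoc, mul_inv_cancel₀ hNpos.ne', one_mul]
  have A4 : (N:ℝ) * (A.mulVec x ⬝ᵥ ((N : ℝ)⁻¹ • ∑ k ∈ Finset.range N, yseq (k+1)))
      = ∑ k ∈ Finset.range N, A.mulVec x ⬝ᵥ yseq (k+1) := by
    rw [dotProduct_smul, smul_eq_mul, ErgAux.dp_sum, ← mul_assoc,
      mul_inv_cancel₀ hNpos.ne', one_mul]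
  -- expand the Lagrangian sum
  have expand : ∑ k ∈ Finset.range N,
        (Lag f g A (xseq (k+1)) y - Lag f g A x (yseq (k+1)))
      = (∑ k ∈ Finset.range N, f (xseq (k+1)))
        + (∑ k ∈ Finset.range N, A.mulVec (xseq (k+1)) ⬝ᵥ y)
        - (N:ℝ) * g y - (N:ℝ) * f x
        - (∑ k ∈ Finset.range N, A.mulVec x ⬝ᵥ yseq (k+1))
        + (∑ k ∈ Finset.range N, g (yseq (k+1))) := by
    simp only [Lag, Finset.sum_sub_distrib, Finset.sum_add_distrib, Finset.sum_const,
      Finset.card_range, nsmul_eq_mul]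
    ring
  rw [expand] at sum_le
  simp only [Lag]
  linarith [sum_le, tel1, tel2, A1, A2, A3, A4]
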